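/- Let G = (V,E) be a finite simple graph, d > 0, α ≥ 1, and suppose V = Z_1 ⊇ ⋯ ⊇ Z_L is an (α,d,L)-decomposition with Z_L ≠ ∅. If additionally every level satisfies ρ(Z_i) < d/(2(1+ε)) for all i ∈ [L−1] with L = 2 + ⌈log_{1+ε} n⌉, n = |V|, ε ∈ (0,1), then we reach a contradiction; i.e., it cannot be the case that Z_L ≠ ∅ while all ρ(Z_i) < d/(2(1+ε)). -/

import Mathlib

open Finset
open scoped Classical

variable {V : Type*} [Fintype V] [DecidableEq V]

/-- Degree of `v` within the node set `S`: number of neighbors of `v` inside `S`. -/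
noncomputable def degIn (G : SimpleGraph V) (v : V) (S : Finset V) : ℕ :=
  (S.filter fun u => G.Adj v u).card

/-- The set of edges of `G` with both endpoints in `S`. -/
noncomputable def edgesIn (G : SimpleGraph V) (S : Finset V) : Finset (Sym2 V) :=
  G.edgeFinset.filter fun e => ∀ v ∈ e, v ∈ S

/-- Density of the subgraph induced by `S`: `|E(S)|/|S|`. -/
noncomputable def density (G : SimpleGraph V) (S : Finset V) : ℝ :=
  (edgesIn G S).card / S.card

/-- An `(α, d, L)`-decomposition of `G`: a chain `V = Z 1 ⊇ Z 2 ⊇ ⋯ ⊇ Z L` such that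
every node of `Z i` with degree `> α d` inside `Z i` is included in `Z (i+1)`, and
no node of `Z i` with degree `< d` inside `Z i` belongs to `Z (i+1)`. -/
def IsDecomp (G : SimpleGraph V) (α d : ℝ) (L : ℕ) (Z : ℕ → Finset V) : Prop :=
  Z 1 = Finset.univ ∧
  (∀ i, 1 ≤ i → i < L → Z (i + 1) ⊆ Z i) ∧
  (∀ i, 1 ≤ i → i < L → ∀ v ∈ Z i, α * d < (degIn G v (Z i) : ℝ) → v ∈ Z (i + 1)) ∧
  (∀ i, 1 ≤ i → i < L → ∀ v ∈ Z i, (degIn G v (Z i) : ℝ) < d → v ∉ Z (i + 1))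

def subg (G : SimpleGraph V) (S : Finset V) : SimpleGraph V where
  Adj v u := G.Adj v u ∧ v ∈ S ∧ u ∈ S
  symm := ⟨by rintro v u ⟨h, hv, hu⟩; exact ⟨h.symm, hu, hv⟩⟩
  loopless := ⟨by rintro v ⟨h, _⟩; exact G.irrefl h⟩

lemma subg_edgeFinset (G : SimpleGraph V) (S : Finset V) :
    (subg G S).edgeFinset = edgesIn G S := by
  ext e
  induction e using Sym2.ind with
  | _ a b =>
    rw [SimpleGraph.mem_edgeFinset]
    simp only [SimpleGraph.mem_edgeFinset, SimpleGraph.mem_edgeSet, subg, edgesIn,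
      Finset.mem_filter, Sym2.mem_iff]
    constructor
    · rintro ⟨h, ha, hb⟩
      exact ⟨h, fun v hv => by rcases hv with rfl | rfl <;> assumption⟩
    · rintro ⟨h, hab⟩
      exact ⟨h, hab a (Or.inl rfl), hab b (Or.inr rfl)⟩

lemma subg_degree (G : SimpleGraph V) (S : Finset V) {v : V} (hv : v ∈ S) :
    (subg G S).degree v = degIn G v S := by
  unfold SimpleGraph.degree degIn
  congr 1
  ext u
  rw [SimpleGraph.mem_neighborFinset]
  simp only [subg, hv, SimpleGraph.mem_neighborFinset, Finset.mem_filter, and_true]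
  tauto

lemma subg_degree_zero (G : SimpleGraph V) (S : Finset V) {v : V} (hv : v ∉ S) :
    (subg G S).degree v = 0 := by
  unfold SimpleGraph.degree
  rw [Finset.card_eq_zero]
  ext u
  rw [SimpleGraph.mem_neighborFinset]
  simp [subg, hv, SimpleGraph.mem_neighborFinset]

lemma sum_degIn (G : SimpleGraph V) (S : Finset V) :
    ∑ v ∈ S, degIn G v S = 2 * (edgesIn G S).card := by
  have h := SimpleGraph.sum_degrees_eq_twice_card_edges (subg G S)
  rw [subg_edgeFinset] at h
  rw [← h]
  rw [← Finset.sum_subset (Finset.subset_univ S)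
    (fun v _ hv => subg_degree_zero G S hv)]
  exact Finset.sum_congr rfl fun v hv => (subg_degree G S hv).symm

set_option linter.unusedSectionVars false

lemma key_step (G : SimpleGraph V) (d ε : ℝ) (hd : 0 < d) (hε0 : 0 < ε)
    (S T : Finset V) (hTS : T ⊆ S) (hSne : S.Nonempty)
    (hdeg : ∀ v ∈ T, d ≤ (degIn G v S : ℝ))
    (hdens : density G S < d / (2 * (1 + ε))) :
    (1 + ε) * (T.card : ℝ) ≤ S.card := by
  unfold density at hdens
  have hS0 : (0:ℝ) < S.card := by exact_mod_cast Finset.card_pos.mpr hSne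
  have hE : ((edgesIn G S).card : ℝ) < d / (2 * (1 + ε)) * S.card :=
    (div_lt_iff₀ hS0).mp hdens
  have hsum : (T.card : ℝ) * d ≤ ∑ v ∈ T, (degIn G v S : ℝ) := by
    have := Finset.card_nsmul_le_sum T (fun v => (degIn G v S : ℝ)) d hdeg
    simpa [nsmul_eq_mul] using this
  have hsum2 : ∑ v ∈ T, (degIn G v S : ℝ) ≤ ∑ v ∈ S, (degIn G v S : ℝ) :=
    Finset.sum_le_sum_of_subset_of_nonneg hTS (by intros; positivity)
  have hh : ∑ v ∈ S, (degIn G v S : ℝ) = 2 * ((edgesIn G S).card : ℝ) := by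
    exact_mod_cast congrArg (Nat.cast : ℕ → ℝ) (sum_degIn G S)
  have h1ε : (0:ℝ) < 1 + ε := by linarith
  have hq : d / (2 * (1 + ε)) * (2 * (1 + ε)) = d :=
    div_mul_cancel₀ d (by positivity)
  have h2 : (T.card : ℝ) * d ≤ 2 * ((edgesIn G S).card : ℝ) := by linarith
  have h3 : 2 * ((edgesIn G S).card : ℝ) * (1 + ε) < d * S.card := by nlinarith
  nlinarith


/-- It cannot be that the topmost level of an `(α,d,L)`-decomposition is nonempty
while every level `Z i`, `i ∈ {1,…,L−1}`, has density `< d/(2(1+ε))`. -/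
theorem nonempty_top_implies_dense_level (G : SimpleGraph V) (α d ε : ℝ)
    (hα : 1 ≤ α) (hd : 0 < d) (hε0 : 0 < ε) (hε1 : ε < 1) (L : ℕ)
    (hL : (L : ℤ) = 2 + ⌈Real.logb (1 + ε) (Fintype.card V)⌉)
    (Z : ℕ → Finset V) (hZ : IsDecomp G α d L Z)
    (hne : (Z L).Nonempty)
    (hall : ∀ i, 1 ≤ i → i < L → density G (Z i) < d / (2 * (1 + ε))) :
    False := by
  obtain ⟨h1, hsub, _, h4⟩ := hZ
  have : Nonempty V := ⟨hne.choose⟩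
  set n := Fintype.card V with hn
  have hn1 : 1 ≤ n := Fintype.card_pos
  have hb : (1:ℝ) < 1 + ε := by linarith
  have hnR : (1:ℝ) ≤ n := by exact_mod_cast hn1
  have hc : (0:ℤ) ≤ ⌈Real.logb (1 + ε) n⌉ :=
    Int.ceil_nonneg (Real.logb_nonneg hb hnR)
  have hL2 : 2 ≤ L := by
    have : (2:ℤ) ≤ (L:ℤ) := by rw [hL]; omega
    exact_mod_cast this
  -- chain of subsets
  have hchain : ∀ j, 1 ≤ j → j ≤ L → ∀ i, 1 ≤ i → i ≤ j → Z j ⊆ Z i := by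
    intro j
    induction j with
    | zero => omega
    | succ k ih =>
      intro _ hjL i h1i hij
      rcases Nat.eq_or_lt_of_le hij with h | h
      · rw [h]
      · have hik : i ≤ k := by omega
        exact (hsub k (by omega) (by omega)).trans (ih (by omega) (by omega) i h1i hik)
  have hZne : ∀ i, 1 ≤ i → i ≤ L → (Z i).Nonempty :=
    fun i h1 h2 => hne.mono (hchain L (by omega) le_rfl i h1 h2)
  -- one-step shrinking
  have hstep : ∀ i, 1 ≤ i → i < L →
      (1 + ε) * ((Z (i+1)).card : ℝ) ≤ (Z i).card := by
    intro i h1 hiL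
    refine key_step G d ε hd hε0 (Z i) (Z (i+1)) (hsub i h1 hiL)
      (hZne i h1 (by omega)) ?_ (hall i h1 hiL)
    intro v hv
    by_contra hlt
    exact h4 i h1 hiL v (hsub i h1 hiL hv) (by linarith [not_le.mp hlt]) hv
  -- iterate
  have main : ∀ k, k + 1 ≤ L → (1 + ε)^k * ((Z (k+1)).card : ℝ) ≤ n := by
    intro k
    induction k with
    | zero =>
      intro _
      simp only [pow_zero, one_mul, h1, hn]
      rw [Finset.card_univ]
    | succ k ih =>
      intro h
      have ih' := ih (by omega)
      have hk := hstep (k+1) (by omega) (by omega)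
      have hp : (0:ℝ) ≤ (1+ε)^k := by positivity
      calc (1+ε)^(k+1) * ((Z (k+2)).card : ℝ)
          = (1+ε)^k * ((1+ε) * (Z (k+2)).card) := by ring
        _ ≤ (1+ε)^k * (Z (k+1)).card := mul_le_mul_of_nonneg_left hk hp
        _ ≤ n := ih'
  have hfin : (1 + ε)^(L-1) * ((Z L).card : ℝ) ≤ n := by
    have := main (L-1) (by omega)
    rwa [Nat.sub_add_cancel (by omega : 1 ≤ L)] at this
  have hZL1 : (1:ℝ) ≤ (Z L).card := by exact_mod_cast Finset.card_pos.mpr hne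
  have hub : (1 + ε)^(L-1) ≤ (n:ℝ) := by nlinarith [pow_nonneg (by linarith : (0:ℝ) ≤ 1+ε) (L-1)]
  -- lower bound on the power
  have hnpos : (0:ℝ) < n := by linarith
  have hx : 1 + Real.logb (1+ε) n ≤ ((L-1 : ℕ) : ℝ) := by
    have hcast : ((L-1 : ℕ) : ℝ) = (L:ℝ) - 1 := by
      have : ((L-1 : ℕ) : ℤ) = (L:ℤ) - 1 := by omega
      exact_mod_cast this
    have hLr : (L:ℝ) = 2 + (⌈Real.logb (1+ε) n⌉ : ℝ) := by exact_mod_cast hL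
    have := Int.le_ceil (Real.logb (1+ε) n)
    rw [hcast, hLr]
    linarith
  have hlb : (1+ε) * (n:ℝ) ≤ (1+ε)^(L-1) := by
    have h0 : (0:ℝ) < 1 + ε := by linarith
    have e1 : (1+ε) * (n:ℝ) = (1+ε) ^ (1 + Real.logb (1+ε) n : ℝ) := by
      rw [Real.rpow_add h0, Real.rpow_one, Real.rpow_logb h0 (by linarith) hnpos]
    have e2 : (1+ε) ^ (1 + Real.logb (1+ε) n : ℝ) ≤ (1+ε) ^ (((L-1:ℕ)):ℝ) :=
      Real.rpow_le_rpow_of_exponent_le hb.le hx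
    rw [Real.rpow_natCast] at e2
    linarith [e1 ▸ e2]
  nlinarith
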